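/- Let C be a braided monoidal category with braiding c. The braiding c is pseudosymmetric (i.e. (c_{Y,Z} ⊗ id_X) ∘ (id_Y ⊗ c_{Z,X}^{-1}) ∘ (c_{X,Y} ⊗ id_Z) = (id_Z ⊗ c_{X,Y}) ∘ (c_{Z,X}^{-1} ⊗ id_Y) ∘ (id_X ⊗ c_{Y,Z}) for all objects X, Y, Z) if and only if the family of double braidings T_{X,Y} := c_{Y,X} ∘ c_{X,Y} satisfies (T_{X,Y} ⊗ id_Z) ∘ (id_X ⊗ T_{Y,Z}) = (id_X ⊗ T_{Y,Z}) ∘ (T_{X,Y} ⊗ id_Z) for all X, Y, Z. -/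

import Mathlib

open CategoryTheory MonoidalCategory

section Aux

open BraidedCategory

variable {C : Type*} [Category C] [MonoidalCategory C] [BraidedCategory C]

/-- A Yang–Baxter-type identity involving braidings with a tensor-product leg. -/
theorem pseudosym_aux_G (X Y Z : C) :
    (α_ Z Y X).hom ≫ (β_ Z (Y⊗X)).hom ≫ (β_ Y X).hom ▷ Z =
    (β_ (Z⊗Y) X).hom ≫ X ◁ (β_ Z Y).hom ≫ (α_ X Y Z).inv := by
  rw [← braiding_naturality_right, ← braiding_naturality_left_assoc]
  simp only [braiding_tensor_left_hom, braiding_tensor_right_hom]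
  rw [← cancel_epi (α_ Z Y X).inv, ← cancel_mono (α_ X Y Z).hom]
  simp only [Category.assoc, Iso.inv_hom_id, Category.comp_id, Iso.inv_hom_id_assoc]
  exact (yang_baxter Z Y X).symm

/-- Composing the left-hand side of the pseudosymmetry equation with
`(β_ Z (Y⊗X)).hom ≫ (β_ Y X).hom ▷ Z` yields the left-hand side of the
double-braiding commutation equation. -/
theorem pseudosym_aux_L (X Y Z : C) :
    (β_ X Y).hom ▷ Z ≫ (α_ Y X Z).hom ≫ Y ◁ (β_ Z X).inv ≫ (α_ Y Z X).inv ≫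
      (β_ Y Z).hom ▷ X ≫ (α_ Z Y X).hom ≫ (β_ Z (Y⊗X)).hom ≫ (β_ Y X).hom ▷ Z =
    ((β_ X Y).hom ≫ (β_ Y X).hom) ▷ Z ≫ (α_ X Y Z).hom ≫
      X ◁ ((β_ Y Z).hom ≫ (β_ Z Y).hom) ≫ (α_ X Y Z).inv := by
  rw [pseudosym_aux_G, braiding_naturality_left_assoc, braiding_tensor_left_hom]
  simp only [Category.assoc, Iso.inv_hom_id_assoc, MonoidalCategory.whiskerLeft_comp,
    comp_whiskerRight]
  simp only [← MonoidalCategory.whiskerLeft_comp_assoc, Iso.inv_hom_id,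
    MonoidalCategory.whiskerLeft_id, Category.id_comp, Iso.hom_inv_id_assoc]

/-- Composing the right-hand side of the pseudosymmetry equation with
`(β_ Z (Y⊗X)).hom ≫ (β_ Y X).hom ▷ Z` yields the right-hand side of the
double-braiding commutation equation. -/
theorem pseudosym_aux_R (X Y Z : C) :
    (α_ X Y Z).hom ≫ X ◁ (β_ Y Z).hom ≫ (α_ X Z Y).inv ≫ (β_ Z X).inv ▷ Y ≫
      (α_ Z X Y).hom ≫ Z ◁ (β_ X Y).hom ≫ (β_ Z (Y⊗X)).hom ≫ (β_ Y X).hom ▷ Z =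
    (α_ X Y Z).hom ≫ X ◁ ((β_ Y Z).hom ≫ (β_ Z Y).hom) ≫ (α_ X Y Z).inv ≫
      ((β_ X Y).hom ≫ (β_ Y X).hom) ▷ Z := by
  rw [braiding_naturality_right_assoc, braiding_tensor_right_hom]
  simp only [Category.assoc, Iso.inv_hom_id_assoc, Iso.hom_inv_id_assoc,
    MonoidalCategory.whiskerLeft_comp, comp_whiskerRight]
  simp only [← comp_whiskerRight_assoc, Iso.inv_hom_id, id_whiskerRight, Category.id_comp]
  simp only [Iso.inv_hom_id_assoc]

/-- Pointwise version of the theorem. -/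
theorem pseudosym_aux_key (X Y Z : C) :
    ((β_ X Y).hom ▷ Z ≫ (α_ Y X Z).hom ≫ Y ◁ (β_ Z X).inv ≫ (α_ Y Z X).inv ≫
        (β_ Y Z).hom ▷ X ≫ (α_ Z Y X).hom =
      (α_ X Y Z).hom ≫ X ◁ (β_ Y Z).hom ≫ (α_ X Z Y).inv ≫ (β_ Z X).inv ▷ Y ≫
        (α_ Z X Y).hom ≫ Z ◁ (β_ X Y).hom) ↔
    (((β_ X Y).hom ≫ (β_ Y X).hom) ▷ Z ≫ (α_ X Y Z).hom ≫
        X ◁ ((β_ Y Z).hom ≫ (β_ Z Y).hom) ≫ (α_ X Y Z).inv =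
      (α_ X Y Z).hom ≫ X ◁ ((β_ Y Z).hom ≫ (β_ Z Y).hom) ≫ (α_ X Y Z).inv ≫
        ((β_ X Y).hom ≫ (β_ Y X).hom) ▷ Z) := by
  constructor
  · intro h
    rw [← pseudosym_aux_L, ← pseudosym_aux_R, reassoc_of% h]
  · intro h
    rw [← cancel_mono ((β_ Z (Y⊗X)).hom), ← cancel_mono ((β_ Y X).hom ▷ Z)]
    simp only [Category.assoc]
    rw [pseudosym_aux_L, pseudosym_aux_R, h]

end Aux

/-- A braiding on a monoidal category is pseudosymmetric iff the double
braidings `T_{X,Y} = c_{Y,X} ∘ c_{X,Y}` satisfy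
`(T_{X,Y} ⊗ id_Z)(id_X ⊗ T_{Y,Z}) = (id_X ⊗ T_{Y,Z})(T_{X,Y} ⊗ id_Z)`. -/
theorem pseudosymmetric_iff_double_braidings_commute
    {C : Type*} [Category C] [MonoidalCategory C] [BraidedCategory C] :
    (∀ X Y Z : C,
      (β_ X Y).hom ▷ Z ≫ (α_ Y X Z).hom ≫ Y ◁ (β_ Z X).inv ≫ (α_ Y Z X).inv ≫
        (β_ Y Z).hom ▷ X ≫ (α_ Z Y X).hom =
      (α_ X Y Z).hom ≫ X ◁ (β_ Y Z).hom ≫ (α_ X Z Y).inv ≫ (β_ Z X).inv ▷ Y ≫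
        (α_ Z X Y).hom ≫ Z ◁ (β_ X Y).hom) ↔
    (∀ X Y Z : C,
      ((β_ X Y).hom ≫ (β_ Y X).hom) ▷ Z ≫ (α_ X Y Z).hom ≫
        X ◁ ((β_ Y Z).hom ≫ (β_ Z Y).hom) ≫ (α_ X Y Z).inv =
      (α_ X Y Z).hom ≫ X ◁ ((β_ Y Z).hom ≫ (β_ Z Y).hom) ≫ (α_ X Y Z).inv ≫
        ((β_ X Y).hom ≫ (β_ Y X).hom) ▷ Z) :=
  forall_congr' fun X => forall_congr' fun Y => forall_congr' fun Z =>
    pseudosym_aux_key X Y Z
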